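/- Let λ ≥ 1 be an integer, T = (t₁,...,t_λ) positive integers, Z = (z₁,...,z_λ) variables. Then for all n ≥ 0, ω_{2,T}^λ(n+1;Z) = Σ (C(k₁+...+k_λ; k₁,...,k_λ) mod 2) · z₁^{d_{t₁}(k₁)} ··· z_λ^{d_{t_λ}(k_λ)}, where the sum is over all nonnegative integers k₁,...,k_λ with k₁ + 2k₂ + ... + λk_λ = n, the multinomial coefficient is reduced modulo 2 to {0,1}, and d_t(k) = Σ_j c_j t^j for the binary expansion k = Σ_j c_j 2^j. -/

import Mathlib

open MvPolynomial

/-- `binaryWeight t m = ∑_j c_j t^j` where `m = ∑_j c_j 2^j` (`c_j ∈ {0,1}`) is the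
binary expansion of `m`. -/
def binaryWeight (t : ℕ) : ℕ → ℕ
  | 0 => 0
  | m + 1 => (m + 1) % 2 + t * binaryWeight t ((m + 1) / 2)
decreasing_by omega

section Aux

lemma binaryWeight_rec (t k : ℕ) : binaryWeight t k = k % 2 + t * binaryWeight t (k / 2) := by
  cases k with
  | zero => simp [binaryWeight]
  | succ m => rw [binaryWeight]

lemma nat_eq_of_zmod2 {a b : ℕ} (ha : a < 2) (hb : b < 2) (h : (a : ZMod 2) = b) : a = b := by
  interval_cases a <;> interval_cases b <;> simp_all

lemma multinomial_binary {ι : Type*} (s : Finset ι) (f : ι → ℕ) (h : ∀ i ∈ s, f i ≤ 1) :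
    Nat.multinomial s f = Nat.factorial (∑ i ∈ s, f i) := by
  have h1 : ∏ i ∈ s, Nat.factorial (f i) = 1 := Finset.prod_eq_one fun i hi => by
    have := h i hi; interval_cases (f i) <;> rfl
  have h2 := Nat.multinomial_spec s f
  rw [h1, one_mul] at h2
  exact h2

lemma choose_zmod2 (n r : ℕ) :
    ((n.choose r : ℕ) : ZMod 2) =
      ((Nat.choose (n % 2) (r % 2) : ℕ) : ZMod 2) * ((Nat.choose (n / 2) (r / 2) : ℕ) : ZMod 2) := by
  haveI : Fact (Nat.Prime 2) := ⟨Nat.prime_two⟩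
  have h := Choose.choose_modEq_choose_mod_mul_choose_div_nat (p := 2) (n := n) (k := r)
  have := (ZMod.natCast_eq_natCast_iff _ _ _).mpr h
  push_cast at this
  exact this

lemma multinomial_lucas {ι : Type*} (s : Finset ι) (k : ι → ℕ) :
    ((Nat.multinomial s k : ℕ) : ZMod 2) =
      ((Nat.multinomial s (fun i => k i % 2) : ℕ) : ZMod 2) *
      ((Nat.multinomial s (fun i => k i / 2) : ℕ) : ZMod 2) := by
  induction s using Finset.cons_induction with
  | empty => simp
  | cons a s ha ih =>
    rw [Nat.multinomial_cons, Nat.multinomial_cons, Nat.multinomial_cons]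
    push_cast
    rw [ih]
    have hS : ∑ i ∈ s, (k i % 2) + 2 * ∑ i ∈ s, (k i / 2) = ∑ i ∈ s, k i := by
      rw [Finset.mul_sum, ← Finset.sum_add_distrib]
      exact Finset.sum_congr rfl fun i _ => by omega
    by_cases h2 : 2 ≤ ∑ i ∈ s, (k i % 2)
    · have hb : ((Nat.multinomial s (fun i => k i % 2) : ℕ) : ZMod 2) = 0 := by
        rw [multinomial_binary s _ (fun i _ => by omega), ZMod.natCast_eq_zero_iff]
        exact Nat.dvd_factorial (by norm_num) h2
      rw [hb]; ring
    · push_neg at h2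
      by_cases h3 : k a % 2 = 1 ∧ ∑ i ∈ s, (k i % 2) = 1
      · have hra : ((Nat.choose (k a % 2 + ∑ i ∈ s, (k i % 2)) (k a % 2) : ℕ) : ZMod 2) = 0 := by
          rw [h3.1, h3.2]
          decide
        have hla : (((k a + ∑ i ∈ s, k i).choose (k a) : ℕ) : ZMod 2) = 0 := by
          rw [choose_zmod2]
          have e0 : (k a + ∑ i ∈ s, k i) % 2 = 0 := by omega
          rw [e0]
          have : Nat.choose 0 (k a % 2) = 0 := by rw [h3.1]; rfl
          rw [this]
          simp
        rw [hra, hla]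
        ring
      · have e1 : (k a + ∑ i ∈ s, k i) % 2 = k a % 2 + ∑ i ∈ s, (k i % 2) := by omega
        have e2 : (k a + ∑ i ∈ s, k i) / 2 = k a / 2 + ∑ i ∈ s, (k i / 2) := by omega
        rw [choose_zmod2, e1, e2]
        ring

lemma multinomial_mod_two {ι : Type*} (s : Finset ι) (k : ι → ℕ) :
    Nat.multinomial s k % 2 =
      Nat.multinomial s (fun i => k i % 2) % 2 * (Nat.multinomial s (fun i => k i / 2) % 2) := by
  apply nat_eq_of_zmod2 (Nat.mod_lt _ two_pos)
  · have h1 : Nat.multinomial s (fun i => k i % 2) % 2 ≤ 1 := by omega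
    have h2 : Nat.multinomial s (fun i => k i / 2) % 2 ≤ 1 := by omega
    calc Nat.multinomial s (fun i => k i % 2) % 2 * (Nat.multinomial s (fun i => k i / 2) % 2)
        ≤ 1 * 1 := Nat.mul_le_mul h1 h2
      _ < 2 := by norm_num
  · push_cast [ZMod.natCast_mod]
    exact multinomial_lucas s k

section Doubling

variable {R : Type*} [CommRing R] (φ : R →+* R)

/-- `B` is obtained from `A` by substituting `q ↦ q²` and applying `φ` to coefficients. -/
def DoubRel (A B : PowerSeries R) : Prop :=
  (∀ m, PowerSeries.coeff (R := R) (2 * m) B = φ (PowerSeries.coeff (R := R) m A)) ∧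
  (∀ m, m % 2 = 1 → PowerSeries.coeff (R := R) m B = 0)

lemma doubRel_one : DoubRel φ 1 1 := by
  constructor
  · intro m
    by_cases h : m = 0 <;> simp [PowerSeries.coeff_one, h]
  · intro m hm
    rw [PowerSeries.coeff_one, if_neg (by omega)]

lemma doubRel_mul {A B A' B' : PowerSeries R} (h : DoubRel φ A B) (h' : DoubRel φ A' B') :
    DoubRel φ (A * A') (B * B') := by
  constructor
  · intro m
    rw [PowerSeries.coeff_mul, PowerSeries.coeff_mul, map_sum]
    have hfil : ∀ x ∈ Finset.HasAntidiagonal.antidiagonal (2 * m),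
        PowerSeries.coeff (R := R) x.1 B * PowerSeries.coeff (R := R) x.2 B' ≠ 0 →
          (fun x : ℕ × ℕ => x.1 % 2 = 0) x := by
      intro x hx hne
      by_contra hodd
      exact hne (by rw [h.2 x.1 (by omega), zero_mul])
    rw [← Finset.sum_filter_of_ne hfil]
    refine Finset.sum_nbij' (i := fun x : ℕ × ℕ => (x.1 / 2, x.2 / 2))
      (j := fun y : ℕ × ℕ => (2 * y.1, 2 * y.2)) ?_ ?_ ?_ ?_ ?_
    · intro x hx
      simp only [Finset.mem_filter, Finset.HasAntidiagonal.mem_antidiagonal] at hx ⊢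
      omega
    · intro y hy
      simp only [Finset.mem_filter, Finset.HasAntidiagonal.mem_antidiagonal] at hy ⊢
      omega
    · intro x hx
      simp only [Finset.mem_filter, Finset.HasAntidiagonal.mem_antidiagonal] at hx
      simp only [Prod.ext_iff]
      constructor <;> omega
    · intro y hy
      simp only [Prod.ext_iff]
      constructor <;> omega
    · intro x hx
      simp only [Finset.mem_filter, Finset.HasAntidiagonal.mem_antidiagonal] at hx
      have e1 : x.1 = 2 * (x.1 / 2) := by omega
      have e2 : x.2 = 2 * (x.2 / 2) := by omega
      rw [map_mul, ← h.1, ← h'.1, ← e1, ← e2]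
  · intro m hm
    rw [PowerSeries.coeff_mul]
    apply Finset.sum_eq_zero
    intro x hx
    rw [Finset.HasAntidiagonal.mem_antidiagonal] at hx
    by_cases he : x.1 % 2 = 0
    · rw [h'.2 x.2 (by omega), mul_zero]
    · rw [h.2 x.1 (by omega), zero_mul]

lemma doubRel_prod {ι : Type*} (s : Finset ι) (A B : ι → PowerSeries R)
    (h : ∀ j ∈ s, DoubRel φ (A j) (B j)) :
    DoubRel φ (∏ j ∈ s, A j) (∏ j ∈ s, B j) := by
  induction s using Finset.cons_induction with
  | empty => simpa using doubRel_one φ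
  | cons a s ha ih =>
    rw [Finset.prod_cons, Finset.prod_cons]
    exact doubRel_mul φ (h a (Finset.mem_cons_self a s))
      (ih fun j hj => h j (Finset.mem_cons_of_mem hj))

end Doubling

lemma sum_antidiagonal_ite {M : Type*} [AddCommMonoid M] (n c : ℕ) (h : ℕ → M) :
    ∑ x ∈ Finset.HasAntidiagonal.antidiagonal n, (if x.2 = c then h x.1 else 0) = if c ≤ n then h (n - c) else 0 := by
  by_cases hc : c ≤ n
  · rw [if_pos hc, Finset.sum_eq_single (n - c, c)]
    · simp
    · intro b hb hne
      rw [Finset.HasAntidiagonal.mem_antidiagonal] at hb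
      rw [if_neg]
      intro h2
      exact hne (by cases b; simp_all; omega)
    · intro habs
      exact absurd (Finset.HasAntidiagonal.mem_antidiagonal.mpr (by simp; omega)) habs
  · rw [if_neg hc]
    apply Finset.sum_eq_zero
    intro x hx
    rw [Finset.HasAntidiagonal.mem_antidiagonal] at hx
    rw [if_neg]
    intro h2
    omega

noncomputable def Sfun (lam : ℕ) (T : Fin lam → ℕ) (n : ℕ) : MvPolynomial (Fin lam) ℤ :=
  ∑ k ∈ (Fintype.piFinset fun _ : Fin lam => Finset.range (n + 1)).filter
      (fun k => ∑ i, (i.1 + 1) * k i = n),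
    ((Nat.multinomial Finset.univ k % 2 : ℕ) : MvPolynomial (Fin lam) ℤ) *
      ∏ i, X i ^ binaryWeight (T i) (k i)

lemma mem_F {lam n : ℕ} {k : Fin lam → ℕ} :
    k ∈ (Fintype.piFinset fun _ : Fin lam => Finset.range (n + 1)).filter
      (fun k => ∑ i, (i.1 + 1) * k i = n) ↔ ∑ i, (i.1 + 1) * k i = n := by
  simp only [Finset.mem_filter, Fintype.mem_piFinset, Finset.mem_range]
  constructor
  · exact fun h => h.2
  · intro h
    refine ⟨fun i => ?_, h⟩
    have h1 : (i.1 + 1) * k i ≤ n := h ▸ Finset.single_le_sum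
      (f := fun i : Fin lam => (i.1 + 1) * k i) (fun i _ => Nat.zero_le _) (Finset.mem_univ i)
    have h2 : k i ≤ (i.1 + 1) * k i := Nat.le_mul_of_pos_left _ (Nat.succ_pos _)
    omega

lemma Sfun_zero (lam : ℕ) (T : Fin lam → ℕ) : Sfun lam T 0 = 1 := by
  rw [Sfun, Finset.sum_eq_single_of_mem (fun _ => 0) (mem_F.mpr (by simp))]
  · have h0 : Nat.multinomial (Finset.univ : Finset (Fin lam)) (fun _ => 0) = 1 := by
      simp [Nat.multinomial]
    rw [h0]
    simp [binaryWeight]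
  · intro k hk hne
    rw [mem_F] at hk
    exfalso
    apply hne
    funext i
    have h1 : (i.1 + 1) * k i = 0 :=
      Finset.sum_eq_zero_iff.mp hk i (Finset.mem_univ i)
    simpa using h1

noncomputable def phiT (lam : ℕ) (T : Fin lam → ℕ) :
    MvPolynomial (Fin lam) ℤ →+* MvPolynomial (Fin lam) ℤ :=
  (aeval (fun i => (X i : MvPolynomial (Fin lam) ℤ) ^ T i)).toRingHom

lemma phiT_X_pow (lam : ℕ) (T : Fin lam → ℕ) (i : Fin lam) (e : ℕ) :
    phiT lam T ((X i : MvPolynomial (Fin lam) ℤ) ^ e) = X i ^ (T i * e) := by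
  simp [phiT, pow_mul]

lemma czero (lam : ℕ) (k : Fin lam → ℕ)
    (h : 2 ≤ (Finset.univ.filter fun i => k i % 2 = 1).card) :
    Nat.multinomial Finset.univ k % 2 = 0 := by
  have hsum : ∑ i, (k i % 2) = (Finset.univ.filter fun i => k i % 2 = 1).card := by
    rw [Finset.card_filter]
    refine Finset.sum_congr rfl fun i _ => ?_
    rcases Nat.mod_two_eq_zero_or_one (k i) with h | h <;> simp [h]
  have hb : Nat.multinomial Finset.univ (fun i => k i % 2) % 2 = 0 := by
    rw [multinomial_binary _ _ (fun i _ => by omega), hsum]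
    have := Nat.dvd_factorial (two_pos) h
    omega
  rw [multinomial_mod_two, hb, zero_mul]

noncomputable def fjP (lam : ℕ) (T : Fin lam → ℕ) (j : ℕ) : PowerSeries (MvPolynomial (Fin lam) ℤ) :=
  1 + ∑ i : Fin lam,
    PowerSeries.C (R := MvPolynomial (Fin lam) ℤ) ((X i : MvPolynomial (Fin lam) ℤ) ^ T i ^ j) *
      PowerSeries.X ^ ((i.1 + 1) * 2 ^ j)

lemma coeff_fjP (lam : ℕ) (T : Fin lam → ℕ) (j m : ℕ) :
    PowerSeries.coeff (R := MvPolynomial (Fin lam) ℤ) m (fjP lam T j) =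
      (if m = 0 then 1 else 0) +
        ∑ i : Fin lam,
          (if m = (i.1 + 1) * 2 ^ j then (X i : MvPolynomial (Fin lam) ℤ) ^ T i ^ j else 0) := by
  rw [fjP, map_add, map_sum, PowerSeries.coeff_one]
  congr 1
  refine Finset.sum_congr rfl fun i _ => ?_
  rw [PowerSeries.coeff_C_mul, PowerSeries.coeff_X_pow, mul_ite, mul_one, mul_zero]

lemma doubRel_fjP (lam : ℕ) (T : Fin lam → ℕ) (j : ℕ) :
    DoubRel (phiT lam T) (fjP lam T j) (fjP lam T (j + 1)) := by
  constructor
  · intro m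
    rw [coeff_fjP, coeff_fjP, map_add, map_sum]
    congr 1
    · by_cases h : m = 0
      · simp [h]
      · rw [if_neg h, if_neg (by omega), map_zero]
    · refine Finset.sum_congr rfl fun i _ => ?_
      have e : (i.1 + 1) * 2 ^ (j + 1) = 2 * ((i.1 + 1) * 2 ^ j) := by
        rw [pow_succ]; ring
      rw [apply_ite (phiT lam T), map_zero, phiT_X_pow, e]
      have e2 : T i * T i ^ j = T i ^ (j + 1) := (pow_succ' (T i) j).symm
      rw [e2]
      exact if_congr (by omega) rfl rfl
  · intro m hm
    rw [coeff_fjP, if_neg (by omega), zero_add]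
    apply Finset.sum_eq_zero
    intro i _
    rw [if_neg]
    have e : (i.1 + 1) * 2 ^ (j + 1) = 2 * ((i.1 + 1) * 2 ^ j) := by
      rw [pow_succ]; ring
    omega
lemma Sfun_rec (lam : ℕ) (T : Fin lam → ℕ) (n : ℕ) :
    Sfun lam T n =
      (if n % 2 = 0 then phiT lam T (Sfun lam T (n / 2)) else 0) +
        ∑ i : Fin lam, (if (i.1 + 1) ≤ n ∧ (n - (i.1 + 1)) % 2 = 0
          then X i * phiT lam T (Sfun lam T ((n - (i.1 + 1)) / 2)) else 0) := by
  classical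
  have hS : ∀ m : ℕ, Sfun lam T m =
      ∑ k ∈ (Fintype.piFinset fun _ : Fin lam => Finset.range (m + 1)).filter
        (fun k => ∑ i, (i.1 + 1) * k i = m),
      ((Nat.multinomial Finset.univ k % 2 : ℕ) : MvPolynomial (Fin lam) ℤ) *
        ∏ i, X i ^ binaryWeight (T i) (k i) := fun m => rfl
  set c : (Fin lam → ℕ) → MvPolynomial (Fin lam) ℤ := fun k =>
    ((Nat.multinomial Finset.univ k % 2 : ℕ) : MvPolynomial (Fin lam) ℤ) *
      ∏ i, X i ^ binaryWeight (T i) (k i) with hc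
  set F : Finset (Fin lam → ℕ) :=
    (Fintype.piFinset fun _ : Fin lam => Finset.range (n + 1)).filter
      (fun k => ∑ i, (i.1 + 1) * k i = n) with hFdef
  set sel : (Fin lam → ℕ) → Option (Fin lam) := fun k =>
    if h : ∃ i, (Finset.univ.filter fun i => k i % 2 = 1) = {i} then some h.choose else none
    with hseldef
  have hsel_some : ∀ (k : Fin lam → ℕ) (i₀ : Fin lam),
      sel k = some i₀ ↔ (Finset.univ.filter fun i => k i % 2 = 1) = {i₀} := by
    intro k i₀
    by_cases h : ∃ i, (Finset.univ.filter fun i => k i % 2 = 1) = {i}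
    · rw [hseldef]
      simp only [dif_pos h, Option.some_inj]
      constructor
      · intro he; rw [← he]; exact h.choose_spec
      · intro he
        exact Finset.singleton_injective (h.choose_spec.symm.trans he)
    · rw [hseldef]
      simp only [dif_neg h]
      exact iff_of_false (by simp) (fun he => h ⟨i₀, he⟩)
  have hsel_none : ∀ k : Fin lam → ℕ,
      sel k = none ↔ ¬ ∃ i, (Finset.univ.filter fun i => k i % 2 = 1) = {i} := by
    intro k
    by_cases h : ∃ i, (Finset.univ.filter fun i => k i % 2 = 1) = {i} <;>
      simp [hseldef, dif_pos, dif_neg, h]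
  have key := Finset.sum_fiberwise F sel c
  rw [hS n, ← key, Fintype.sum_option]
  congr 1
  -- none fiber
  · have hzero2 : ∀ k ∈ F.filter (fun k => sel k = none), ¬(∀ i, k i % 2 = 0) → c k = 0 := by
      intro k hk hne
      rw [Finset.mem_filter, hsel_none] at hk
      push_neg at hne
      obtain ⟨i, hi⟩ := hne
      have hmem : i ∈ Finset.univ.filter fun i => k i % 2 = 1 := by
        simp only [Finset.mem_filter, Finset.mem_univ, true_and]; omega
      have hcard : 2 ≤ (Finset.univ.filter fun i => k i % 2 = 1).card := by
        rcases Nat.lt_or_ge (Finset.univ.filter fun i => k i % 2 = 1).card 2 with hlt | hge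
        · exfalso
          have h1 : 1 ≤ (Finset.univ.filter fun i => k i % 2 = 1).card :=
            Finset.card_pos.mpr ⟨i, hmem⟩
          have h2 : (Finset.univ.filter fun i => k i % 2 = 1).card = 1 := by omega
          obtain ⟨a, haa⟩ := Finset.card_eq_one.mp h2
          exact hk.2 ⟨a, haa⟩
        · exact hge
      rw [hc]
      simp only
      rw [czero lam k hcard]
      simp
    by_cases hpar : n % 2 = 0
    · rw [if_pos hpar]
      have hsub : F.filter (fun k => ∀ i, k i % 2 = 0) ⊆ F.filter (fun k => sel k = none) := by
        intro k hk
        rw [Finset.mem_filter] at hk ⊢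
        refine ⟨hk.1, (hsel_none k).mpr ?_⟩
        rintro ⟨i, hi⟩
        have : i ∈ Finset.univ.filter fun i => k i % 2 = 1 := hi ▸ Finset.mem_singleton_self i
        simp only [Finset.mem_filter] at this
        have := hk.2 i
        omega
      rw [← Finset.sum_subset hsub (fun k hk hnk => hzero2 k hk (by
        rw [Finset.mem_filter] at hnk hk
        intro hall
        exact hnk ⟨hk.1, hall⟩))]
      rw [hS (n / 2), map_sum]
      refine Finset.sum_nbij' (i := fun (k : Fin lam → ℕ) (i : Fin lam) => k i / 2)
        (j := fun (m : Fin lam → ℕ) (i : Fin lam) => 2 * m i) ?_ ?_ ?_ ?_ ?_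
      · intro k hk
        rw [Finset.mem_filter] at hk
        obtain ⟨hkF, hkev⟩ := hk
        rw [hFdef, mem_F] at hkF
        apply mem_F.mpr
        show ∑ i : Fin lam, (i.1 + 1) * (k i / 2) = n / 2
        have : ∑ i, (i.1 + 1) * k i = 2 * ∑ i, (i.1 + 1) * (k i / 2) := by
          rw [Finset.mul_sum]
          refine Finset.sum_congr rfl fun i _ => ?_
          have h1 := hkev i
          obtain ⟨q, hq⟩ : ∃ q, k i = 2 * q := ⟨k i / 2, by omega⟩
          rw [hq, Nat.mul_div_cancel_left _ (by norm_num : (0:ℕ) < 2)]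
          ring
        omega
      · intro m hm
        rw [mem_F] at hm
        rw [Finset.mem_filter]
        constructor
        · rw [hFdef]
          apply mem_F.mpr
          show ∑ i : Fin lam, (i.1 + 1) * (2 * m i) = n
          have : ∑ i, (i.1 + 1) * (2 * m i) = 2 * ∑ i, (i.1 + 1) * m i := by
            rw [Finset.mul_sum]
            exact Finset.sum_congr rfl fun i _ => by ring
          omega
        · intro i
          show (2 * m i) % 2 = 0
          omega
      · intro k hk
        rw [Finset.mem_filter] at hk
        funext i
        have := hk.2 i
        show 2 * (k i / 2) = k i
        omega
      · intro m hm
        funext i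
        show (2 * m i) / 2 = m i
        omega
      · intro k hk
        rw [Finset.mem_filter] at hk
        obtain ⟨hkF, hkev⟩ := hk
        rw [hc]
        simp only
        rw [map_mul, map_natCast, map_prod]
        have hb : (fun i => k i % 2) = (fun _ : Fin lam => 0) := funext fun i => hkev i
        have hm2 : Nat.multinomial Finset.univ k % 2 =
            Nat.multinomial Finset.univ (fun i => k i / 2) % 2 := by
          rw [multinomial_mod_two Finset.univ k, hb,
            multinomial_binary _ _ (fun i _ => by omega)]
          simp
        rw [hm2]
        congr 1
        refine Finset.prod_congr rfl fun i _ => ?_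
        show (X i : MvPolynomial (Fin lam) ℤ) ^ binaryWeight (T i) (k i) =
          phiT lam T (X i ^ binaryWeight (T i) (k i / 2))
        rw [phiT_X_pow, binaryWeight_rec (T i) (k i), hkev i, zero_add]
    · rw [if_neg hpar]
      apply Finset.sum_eq_zero
      intro k hk
      by_cases hev : ∀ i, k i % 2 = 0
      · exfalso
        rw [Finset.mem_filter] at hk
        have hkF : ∑ i, (i.1 + 1) * k i = n := by
          have := hk.1
          rw [hFdef, mem_F] at this
          exact this
        have : ∑ i, (i.1 + 1) * k i = 2 * ∑ i, (i.1 + 1) * (k i / 2) := by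
          rw [Finset.mul_sum]
          refine Finset.sum_congr rfl fun i _ => ?_
          have h1 := hev i
          obtain ⟨q, hq⟩ : ∃ q, k i = 2 * q := ⟨k i / 2, by omega⟩
          rw [hq, Nat.mul_div_cancel_left _ (by norm_num : (0:ℕ) < 2)]
          ring
        omega
      · exact hzero2 k hk hev
  -- some fibers
  · refine Finset.sum_congr rfl fun i₀ _ => ?_
    have hfib : F.filter (fun k => sel k = some i₀) =
        F.filter (fun k => (Finset.univ.filter fun i => k i % 2 = 1) = {i₀}) :=
      Finset.filter_congr fun k _ => by rw [hsel_some]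
    rw [hfib]
    have hfacts : ∀ k ∈ F.filter (fun k => (Finset.univ.filter fun i => k i % 2 = 1) = {i₀}),
        (∀ i : Fin lam, k i % 2 = if i = i₀ then 1 else 0) ∧
          n = 2 * (∑ i, (i.1 + 1) * (k i / 2)) + (i₀.1 + 1) := by
      intro k hk
      rw [Finset.mem_filter] at hk
      obtain ⟨hkF, heq⟩ := hk
      rw [hFdef, mem_F] at hkF
      have hmod : ∀ i : Fin lam, k i % 2 = if i = i₀ then 1 else 0 := by
        intro i
        have hmm : i ∈ Finset.univ.filter (fun i => k i % 2 = 1) ↔ i ∈ ({i₀} : Finset (Fin lam)) := by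
          rw [heq]
        simp only [Finset.mem_filter, Finset.mem_univ, true_and, Finset.mem_singleton] at hmm
        by_cases hi : i = i₀
        · rw [if_pos hi]
          exact hmm.mpr hi
        · rw [if_neg hi]
          have h2 : ¬ k i % 2 = 1 := fun h => hi (hmm.mp h)
          omega
      refine ⟨hmod, ?_⟩
      have : ∑ i, (i.1 + 1) * k i =
          ∑ i, (2 * ((i.1 + 1) * (k i / 2)) + (if i = i₀ then i.1 + 1 else 0)) := by
        refine Finset.sum_congr rfl fun i _ => ?_
        have := hmod i
        by_cases hi : i = i₀
        · rw [if_pos hi]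
          rw [if_pos hi] at this
          obtain ⟨q, hq⟩ : ∃ q, k i = 2 * q + 1 := ⟨k i / 2, by omega⟩
          have hq2 : (2 * q + 1) / 2 = q := by omega
          rw [hq, hq2]; ring
        · rw [if_neg hi]
          rw [if_neg hi] at this
          obtain ⟨q, hq⟩ : ∃ q, k i = 2 * q := ⟨k i / 2, by omega⟩
          have hq2 : (2 * q) / 2 = q := by omega
          rw [hq, hq2]; ring
      rw [this, Finset.sum_add_distrib, Finset.sum_ite_eq' Finset.univ i₀
        (fun i : Fin lam => i.1 + 1), if_pos (Finset.mem_univ i₀), ← Finset.mul_sum] at hkF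
      omega
    by_cases hcond : (i₀.1 + 1) ≤ n ∧ (n - (i₀.1 + 1)) % 2 = 0
    · rw [if_pos hcond, hS ((n - (i₀.1 + 1)) / 2), map_sum, Finset.mul_sum]
      refine Finset.sum_nbij' (i := fun (k : Fin lam → ℕ) (i : Fin lam) => k i / 2)
        (j := fun (m : Fin lam → ℕ) (i : Fin lam) => 2 * m i + if i = i₀ then 1 else 0)
        ?_ ?_ ?_ ?_ ?_
      · intro k hk
        obtain ⟨hmod, hdec⟩ := hfacts k hk
        apply mem_F.mpr
        show ∑ i : Fin lam, (i.1 + 1) * (k i / 2) = (n - (i₀.1 + 1)) / 2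
        omega
      · intro m hm
        rw [mem_F] at hm
        rw [Finset.mem_filter]
        constructor
        · rw [hFdef]
          apply mem_F.mpr
          show ∑ i : Fin lam, (i.1 + 1) * (2 * m i + if i = i₀ then 1 else 0) = n
          have : ∑ i, (i.1 + 1) * (2 * m i + if i = i₀ then 1 else 0) =
              2 * (∑ i, (i.1 + 1) * m i) + (i₀.1 + 1) := by
            have h1 : ∀ i : Fin lam, (i.1 + 1) * (2 * m i + if i = i₀ then 1 else 0) =
                2 * ((i.1 + 1) * m i) + (if i = i₀ then i.1 + 1 else 0) := by
              intro i
              by_cases hi : i = i₀ <;> simp only [hi, if_true, if_false] <;> ring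
            rw [Finset.sum_congr rfl fun i _ => h1 i, Finset.sum_add_distrib,
              Finset.sum_ite_eq' Finset.univ i₀ (fun i : Fin lam => i.1 + 1),
              if_pos (Finset.mem_univ i₀), ← Finset.mul_sum]
          omega
        · show (Finset.univ.filter fun i => (2 * m i + if i = i₀ then 1 else 0) % 2 = 1) = {i₀}
          ext i
          simp only [Finset.mem_filter, Finset.mem_univ, true_and, Finset.mem_singleton]
          by_cases hi : i = i₀ <;> simp [hi] <;> omega
      · intro k hk
        obtain ⟨hmod, _⟩ := hfacts k hk
        funext i
        have := hmod i
        show 2 * (k i / 2) + (if i = i₀ then 1 else 0) = k i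
        by_cases hi : i = i₀ <;> simp only [hi, if_true, if_false] at this ⊢ <;> omega
      · intro m hm
        funext i
        show (2 * m i + if i = i₀ then 1 else 0) / 2 = m i
        by_cases hi : i = i₀ <;> simp only [hi, if_true, if_false] <;> omega
      · intro k hk
        obtain ⟨hmod, _⟩ := hfacts k hk
        rw [hc]
        simp only
        rw [map_mul, map_natCast, map_prod]
        have hb : (fun i => k i % 2) = (fun i : Fin lam => if i = i₀ then 1 else 0) :=
          funext fun i => hmod i
        have hm2 : Nat.multinomial Finset.univ k % 2 =
            Nat.multinomial Finset.univ (fun i => k i / 2) % 2 := by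
          rw [multinomial_mod_two Finset.univ k, hb,
            multinomial_binary _ _ (fun i _ => by split <;> omega),
            Finset.sum_ite_eq' Finset.univ i₀ (fun _ : Fin lam => 1),
            if_pos (Finset.mem_univ i₀)]
          norm_num
        rw [hm2]
        have hprod : ∏ i, (X i : MvPolynomial (Fin lam) ℤ) ^ binaryWeight (T i) (k i) =
            X i₀ * ∏ i, (X i : MvPolynomial (Fin lam) ℤ) ^ (T i * binaryWeight (T i) (k i / 2)) := by
          have h1 : ∀ i : Fin lam, (X i : MvPolynomial (Fin lam) ℤ) ^ binaryWeight (T i) (k i) =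
              (if i = i₀ then (X i : MvPolynomial (Fin lam) ℤ) else 1) *
                X i ^ (T i * binaryWeight (T i) (k i / 2)) := by
            intro i
            rw [binaryWeight_rec, hmod i, pow_add]
            by_cases hi : i = i₀ <;> simp [hi]
          rw [Finset.prod_congr rfl fun i _ => h1 i, Finset.prod_mul_distrib,
            Finset.prod_ite_eq' Finset.univ i₀ (fun i : Fin lam => (X i : MvPolynomial (Fin lam) ℤ)),
            if_pos (Finset.mem_univ i₀)]
        rw [hprod]
        have hphi : ∀ i : Fin lam, phiT lam T ((X i : MvPolynomial (Fin lam) ℤ) ^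
            binaryWeight (T i) (k i / 2)) = X i ^ (T i * binaryWeight (T i) (k i / 2)) :=
          fun i => phiT_X_pow lam T i _
        rw [Finset.prod_congr rfl fun i _ => (hphi i)]
        ring
    · rw [if_neg hcond]
      apply Finset.sum_eq_zero
      intro k hk
      exfalso
      obtain ⟨_, hdec⟩ := hfacts k hk
      exact hcond (by omega)

end Aux

/-- Explicit formula for the `λ`-variable polynomials `ω_{2,T}^λ`, characterized by the
generating function
`∑_{n≥0} ω_{2,T}^λ(n+1; Z) q^n = ∏_{j≥0} (1 + z₁^{t₁^j} q^{2^j} + ⋯ + z_λ^{t_λ^j} q^{λ 2^j})`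
(rendered coefficientwise via stabilized partial products): for all `n ≥ 0`,
`ω_{2,T}^λ(n+1; Z) = ∑_{k₁+2k₂+⋯+λk_λ=n} (multinomial(k₁,…,k_λ) mod 2) · z₁^{d_{t₁}(k₁)} ⋯ z_λ^{d_{t_λ}(k_λ)}`. -/
theorem omega_binary_multinomial_formula (lam : ℕ) (hlam : 1 ≤ lam)
    (T : Fin lam → ℕ) (hT : ∀ i, 1 ≤ T i)
    (w : ℕ → MvPolynomial (Fin lam) ℤ)
    (hw : ∀ n N : ℕ, n < 2 ^ N →
      PowerSeries.coeff (R := MvPolynomial (Fin lam) ℤ) n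
        (∏ j ∈ Finset.range N,
          (1 + ∑ i : Fin lam,
            PowerSeries.C (R := MvPolynomial (Fin lam) ℤ)
                ((X i : MvPolynomial (Fin lam) ℤ) ^ T i ^ j) *
              PowerSeries.X ^ ((i.1 + 1) * 2 ^ j))) = w (n + 1)) :
    ∀ n : ℕ,
      w (n + 1) =
        ∑ k ∈ (Fintype.piFinset fun _ : Fin lam => Finset.range (n + 1)).filter
            (fun k => ∑ i, (i.1 + 1) * k i = n),
          ((Nat.multinomial Finset.univ k % 2 : ℕ) : MvPolynomial (Fin lam) ℤ) *
            ∏ i, X i ^ binaryWeight (T i) (k i) := by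
  classical
  have hw' : ∀ n N : ℕ, n < 2 ^ N →
      PowerSeries.coeff (R := MvPolynomial (Fin lam) ℤ) n (∏ j ∈ Finset.range N, fjP lam T j) =
        w (n + 1) := hw
  have hbase : w (0 + 1) = 1 := by
    have h := hw' 0 0 (by norm_num)
    rw [← h]
    simp
  have hQcoeff : ∀ n p : ℕ, p ≤ n →
      PowerSeries.coeff (R := MvPolynomial (Fin lam) ℤ) p
          (∏ j ∈ Finset.range n, fjP lam T (j + 1)) =
        if p % 2 = 0 then phiT lam T (w (p / 2 + 1)) else 0 := by
    intro n p hp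
    have hrel : DoubRel (phiT lam T) (∏ j ∈ Finset.range n, fjP lam T j)
        (∏ j ∈ Finset.range n, fjP lam T (j + 1)) :=
      doubRel_prod (phiT lam T) _ _ _ (fun j _ => doubRel_fjP lam T j)
    by_cases hp2 : p % 2 = 0
    · rw [if_pos hp2]
      obtain ⟨q, rfl⟩ : ∃ q, p = 2 * q := ⟨p / 2, by omega⟩
      have hq : q < 2 ^ n := by
        have := Nat.lt_two_pow_self (n := n)
        omega
      rw [hrel.1 q, hw' q n hq]
      have e : 2 * q / 2 = q := by omega
      rw [e]
    · rw [if_neg hp2]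
      exact hrel.2 p (by omega)
  have wrec : ∀ n : ℕ, w (n + 1) =
      (if n % 2 = 0 then phiT lam T (w (n / 2 + 1)) else 0) +
        ∑ i : Fin lam, (if (i.1 + 1) ≤ n ∧ (n - (i.1 + 1)) % 2 = 0
          then X i * phiT lam T (w ((n - (i.1 + 1)) / 2 + 1)) else 0) := by
    intro n
    have hlt : n < 2 ^ (n + 1) := by
      have h1 := Nat.lt_two_pow_self (n := n)
      have h2 : (2:ℕ) ^ n ≤ 2 ^ (n + 1) := Nat.pow_le_pow_right (by norm_num) (by omega)
      omega
    rw [← hw' n (n + 1) hlt, Finset.prod_range_succ', PowerSeries.coeff_mul]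
    have step1 : ∀ x : ℕ × ℕ,
        PowerSeries.coeff (R := MvPolynomial (Fin lam) ℤ) x.1
            (∏ j ∈ Finset.range n, fjP lam T (j + 1)) *
          PowerSeries.coeff (R := MvPolynomial (Fin lam) ℤ) x.2 (fjP lam T 0) =
          (if x.2 = 0 then PowerSeries.coeff (R := MvPolynomial (Fin lam) ℤ) x.1
              (∏ j ∈ Finset.range n, fjP lam T (j + 1)) else 0) +
            ∑ i : Fin lam, (if x.2 = i.1 + 1 then
              PowerSeries.coeff (R := MvPolynomial (Fin lam) ℤ) x.1
                (∏ j ∈ Finset.range n, fjP lam T (j + 1)) * X i else 0) := by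
      intro x
      rw [coeff_fjP, mul_add, mul_ite, mul_one, mul_zero, Finset.mul_sum]
      congr 1
      refine Finset.sum_congr rfl fun i _ => ?_
      rw [mul_ite, mul_zero]
      have e1 : (i.1 + 1) * 2 ^ (0:ℕ) = i.1 + 1 := by norm_num
      have e2 : (X i : MvPolynomial (Fin lam) ℤ) ^ T i ^ (0:ℕ) = X i := by
        rw [pow_zero, pow_one]
      rw [e1, e2]
    rw [Finset.sum_congr rfl fun x _ => step1 x, Finset.sum_add_distrib, Finset.sum_comm]
    have part1 := sum_antidiagonal_ite n 0 (fun p =>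
      PowerSeries.coeff (R := MvPolynomial (Fin lam) ℤ) p (∏ j ∈ Finset.range n, fjP lam T (j + 1)))
    rw [if_pos (Nat.zero_le n), Nat.sub_zero, hQcoeff n n le_rfl] at part1
    rw [part1]
    congr 1
    refine Finset.sum_congr rfl fun i _ => ?_
    have part2 := sum_antidiagonal_ite n (i.1 + 1) (fun p =>
      PowerSeries.coeff (R := MvPolynomial (Fin lam) ℤ) p (∏ j ∈ Finset.range n, fjP lam T (j + 1)) * X i)
    rw [part2]
    by_cases h1 : i.1 + 1 ≤ n
    · rw [if_pos h1, hQcoeff n (n - (i.1 + 1)) (by omega)]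
      by_cases h2 : (n - (i.1 + 1)) % 2 = 0
      · rw [if_pos h2, if_pos ⟨h1, h2⟩, mul_comm]
      · rw [if_neg h2, if_neg (by tauto), zero_mul]
    · rw [if_neg h1, if_neg (by tauto)]
  intro n
  induction n using Nat.strong_induction_on with
  | _ n IH =>
    have IH' : ∀ m, m < n → w (m + 1) = Sfun lam T m := IH
    show w (n + 1) = Sfun lam T n
    rcases Nat.eq_zero_or_pos n with rfl | hn
    · rw [Sfun_zero]
      exact hbase
    · rw [wrec n, Sfun_rec lam T n]
      refine congrArg₂ (· + ·) ?_ ?_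
      · by_cases h : n % 2 = 0
        · rw [if_pos h, if_pos h, IH' (n / 2) (by omega)]
        · rw [if_neg h, if_neg h]
      · refine Finset.sum_congr rfl fun i _ => ?_
        by_cases h : (i.1 + 1) ≤ n ∧ (n - (i.1 + 1)) % 2 = 0
        · rw [if_pos h, if_pos h, IH' ((n - (i.1 + 1)) / 2) (by omega)]
        · rw [if_neg h, if_neg h]
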